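/- For $n \ge 3$, the monoid $M_n = \{(l_1,\dots,l_n) \in \mathbb{Z}_+^n \mid \sum_{i=1}^n i l_i \equiv 0 \pmod 2\}$ is isomorphic to $\mathbb{Z}_+^{\lfloor n/2 \rfloor} \oplus V$, where $V = \{(k_1,\dots,k_{\lceil n/2\rceil}) \in \mathbb{Z}_+^{\lceil n/2 \rceil} \mid \sum_i k_i \equiv 0 \pmod 2\}$; consequently its monoid algebra over $\mathbb{Z}$ is a polynomial ring in $\lfloor n/2 \rfloor$ variables over the second Veronese subring of a polynomial ring in $\lceil n/2 \rceil$ variables over $\mathbb{Z}$. -/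

import Mathlib

set_option synthInstance.maxHeartbeats 1000000
set_option maxHeartbeats 1000000


open MvPolynomial

/-- The second Veronese subalgebra of `k[t₁,…,t_d]`: the span of the homogeneous polynomials
of even degree, i.e. the polynomials all of whose monomials have even total degree. -/
def evenVeronese (k : Type) [CommRing k] (d : ℕ) : Subalgebra k (MvPolynomial (Fin d) k) where
  carrier := {p | ∀ m ∈ p.support, Even (m.sum fun _ e => e)}
  add_mem' := by
    intro p q hp hq m hm
    rcases Finset.mem_union.1 (Finsupp.support_add hm) with h | h
    · exact hp m h
    · exact hq m h
  mul_mem' := by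
    classical
    intro p q hp hq m hm
    obtain ⟨a, ha, b, hb, rfl⟩ := Finset.mem_add.1 (MvPolynomial.support_mul _ _ hm)
    have h : (a + b).sum (fun _ e => e) = a.sum (fun _ e => e) + b.sum (fun _ e => e) :=
      Finsupp.sum_add_index' (fun _ => rfl) (fun _ _ _ => rfl)
    rw [h]
    exact (hp a ha).add (hq b hb)
  algebraMap_mem' := by
    intro r m hm
    have h : m ∈ ((monomial 0) r : MvPolynomial (Fin d) k).support := by
      rw [← MvPolynomial.C_apply]
      simpa [MvPolynomial.algebraMap_eq] using hm
    have h2 := MvPolynomial.support_monomial_subset h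
    simp only [Finset.mem_singleton] at h2
    subst h2
    simp

/-- The monoid `Mₙ = {(l₁,…,lₙ) ∈ ℤ₊ⁿ | ∑ i·lᵢ ≡ 0 (mod 2)}` (the `Fin n`-index `i`
corresponds to the classical index `i+1`). -/
def MC (n : ℕ) : AddSubmonoid (Fin n → ℕ) where
  carrier := {l | 2 ∣ ∑ i, (i.1 + 1) * l i}
  zero_mem' := by simp
  add_mem' := by
    intro a b ha hb
    have h : (∑ i, (i.1 + 1) * (a + b) i) = (∑ i, (i.1 + 1) * a i) + ∑ i, (i.1 + 1) * b i := by
      simp [Pi.add_apply, mul_add, Finset.sum_add_distrib]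
    show 2 ∣ ∑ i, (i.1 + 1) * (a + b) i
    rw [h]
    exact Nat.dvd_add ha hb

/-- The monoid `V = {(k₁,…,k_m) ∈ ℤ₊^m | ∑ kᵢ ≡ 0 (mod 2)}`. -/
def VC (m : ℕ) : AddSubmonoid (Fin m → ℕ) where
  carrier := {l | 2 ∣ ∑ i, l i}
  zero_mem' := by simp
  add_mem' := by
    intro a b ha hb
    have h : (∑ i, (a + b) i) = (∑ i, a i) + ∑ i, b i := by
      simp [Pi.add_apply, Finset.sum_add_distrib]
    show 2 ∣ ∑ i, (a + b) i
    rw [h]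
    exact Nat.dvd_add ha hb


section Aux

lemma key' (N : ℕ) (l : ℕ → ℕ) :
    (∑ i ∈ Finset.range N, (i + 1) * l i) % 2
      = (∑ j ∈ Finset.range ((N + 1) / 2), l (2 * j)) % 2 := by
  induction N with
  | zero => rfl
  | succ N ih =>
    rcases Nat.even_or_odd N with hN | hN
    · obtain ⟨m, rfl⟩ := hN
      have h1 : (m + m + 1 + 1) / 2 = m + 1 := by omega
      have h2 : (m + m + 1) / 2 = m := by omega
      rw [h2] at ih
      rw [Finset.sum_range_succ, h1, Finset.sum_range_succ]
      have h3 : (m + m + 1) * l (m + m) % 2 = l (m + m) % 2 := by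
        rw [Nat.mul_mod]
        have : (m + m + 1) % 2 = 1 := by omega
        rw [this, one_mul, Nat.mod_mod_of_dvd _ (dvd_refl 2)]
      have h4 : 2 * m = m + m := by omega
      rw [h4]
      omega
    · obtain ⟨m, rfl⟩ := hN
      have h1 : (2 * m + 1 + 1) / 2 = (2 * m + 1 + 1 + 1) / 2 := by omega
      rw [Finset.sum_range_succ, ← h1]
      have h3 : (2 * m + 1 + 1) * l (2 * m + 1) % 2 = 0 := by
        rw [Nat.mul_mod]
        have : (2 * m + 1 + 1) % 2 = 0 := by omega
        rw [this, zero_mul, Nat.zero_mod]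
      omega

lemma key (n : ℕ) (l : Fin n → ℕ) :
    (2 ∣ ∑ i, (i.1 + 1) * l i) ↔ 2 ∣ ∑ j : Fin ((n + 1) / 2), l ⟨2 * j.1, by omega⟩ := by
  classical
  set L : ℕ → ℕ := fun k => if h : k < n then l ⟨k, h⟩ else 0 with hLdef
  have hL : ∑ i, (i.1 + 1) * l i = ∑ i ∈ Finset.range n, (i + 1) * L i := by
    rw [← Fin.sum_univ_eq_sum_range (fun i => (i + 1) * L i) n]
    refine Finset.sum_congr rfl fun i _ => ?_
    simp only [hLdef, dif_pos i.2]
  have hR : (∑ j : Fin ((n + 1) / 2), l ⟨2 * j.1, by omega⟩)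
      = ∑ j ∈ Finset.range ((n + 1) / 2), L (2 * j) := by
    rw [← Fin.sum_univ_eq_sum_range (fun j => L (2 * j)) ((n + 1) / 2)]
    refine Finset.sum_congr rfl fun j _ => ?_
    have hj : 2 * j.1 < n := by omega
    simp only [hLdef, dif_pos hj]
  rw [hL, hR]
  have := key' n L
  omega

def mcEquiv (n : ℕ) : (MC n) ≃+ ((Fin (n / 2) → ℕ) × (VC ((n + 1) / 2))) where
  toFun l :=
    ⟨fun j => l.1 ⟨2 * j.1 + 1, by omega⟩,
     ⟨fun j => l.1 ⟨2 * j.1, by omega⟩, (key n l.1).mp l.2⟩⟩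
  invFun p :=
    ⟨fun i => if h : i.1 % 2 = 0 then p.2.1 ⟨i.1 / 2, by omega⟩ else p.1 ⟨i.1 / 2, by omega⟩,
     by
      apply (key n _).mpr
      have h : ∀ j : Fin ((n + 1) / 2),
          (fun i : Fin n => if h : i.1 % 2 = 0 then p.2.1 ⟨i.1 / 2, by omega⟩
            else p.1 ⟨i.1 / 2, by omega⟩) ⟨2 * j.1, by omega⟩ = p.2.1 j := by
        intro j
        dsimp only
        rw [dif_pos (show 2 * j.1 % 2 = 0 by omega)]
        have h2 : 2 * j.1 / 2 = j.1 := by omega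
        simp only [h2, Fin.eta]
      rw [Finset.sum_congr rfl fun j _ => h j]
      exact p.2.2⟩
  left_inv l := by
    apply Subtype.ext
    funext i
    dsimp only
    by_cases h : i.1 % 2 = 0
    · rw [dif_pos h]
      have h2 : 2 * (i.1 / 2) = i.1 := by omega
      simp only [h2, Fin.eta]
    · rw [dif_neg h]
      have h2 : 2 * (i.1 / 2) + 1 = i.1 := by omega
      simp only [h2, Fin.eta]
  right_inv p := by
    refine Prod.ext ?_ (Subtype.ext ?_)
    · funext j
      dsimp only
      rw [dif_neg (show ¬(2 * j.1 + 1) % 2 = 0 by omega)]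
      have h2 : (2 * j.1 + 1) / 2 = j.1 := by omega
      simp only [h2, Fin.eta]
    · funext j
      dsimp only
      rw [dif_pos (show 2 * j.1 % 2 = 0 by omega)]
      have h2 : 2 * j.1 / 2 = j.1 := by omega
      simp only [h2, Fin.eta]
  map_add' a b := by
    refine Prod.ext rfl (Subtype.ext rfl)

end Aux

section Iter

variable (M N : Type) [AddCommMonoid M] [AddCommMonoid N]

noncomputable def gM : Multiplicative M →* AddMonoidAlgebra ℤ (M × N) where
  toFun m := AddMonoidAlgebra.single (m.toAdd, 0) 1
  map_one' := by rw [AddMonoidAlgebra.one_def]; rfl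
  map_mul' x y := by
    rw [AddMonoidAlgebra.single_mul_single, mul_one]
    congr 1
    simp [Prod.ext_iff]

noncomputable def gN : Multiplicative N →* AddMonoidAlgebra ℤ (M × N) where
  toFun x := AddMonoidAlgebra.single (0, x.toAdd) 1
  map_one' := by rw [AddMonoidAlgebra.one_def]; rfl
  map_mul' x y := by
    rw [AddMonoidAlgebra.single_mul_single, mul_one]
    congr 1
    simp [Prod.ext_iff]

noncomputable def cHom : AddMonoidAlgebra ℤ N →+* AddMonoidAlgebra ℤ (M × N) :=
  AddMonoidAlgebra.liftNCRingHom (Int.castRingHom _) (gN M N) fun _ _ => Commute.all _ _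

lemma cHom_single (n : N) (c : ℤ) :
    cHom M N (AddMonoidAlgebra.single n c) = AddMonoidAlgebra.single ((0 : M), n) c := by
  show AddMonoidAlgebra.liftNC _ _ (AddMonoidAlgebra.single n c) = _
  rw [AddMonoidAlgebra.liftNC_single]
  show ((c : ℤ) : AddMonoidAlgebra ℤ (M × N)) * gN M N (Multiplicative.ofAdd n) = _
  rw [AddMonoidAlgebra.intCast_def]
  show _ * AddMonoidAlgebra.single ((0 : M), n) 1 = _
  rw [AddMonoidAlgebra.single_mul_single, zero_add, mul_one]
  norm_cast

noncomputable def fwdHom :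
    AddMonoidAlgebra (AddMonoidAlgebra ℤ N) M →+* AddMonoidAlgebra ℤ (M × N) :=
  AddMonoidAlgebra.liftNCRingHom (cHom M N) (gM M N) fun _ _ => Commute.all _ _

lemma fwd_single (a : M) (b : AddMonoidAlgebra ℤ N) :
    fwdHom M N (AddMonoidAlgebra.single a b)
      = cHom M N b * AddMonoidAlgebra.single ((a, 0) : M × N) 1 := by
  show AddMonoidAlgebra.liftNC _ _ (AddMonoidAlgebra.single a b) = _
  rw [AddMonoidAlgebra.liftNC_single]
  rfl

noncomputable def gP :
    Multiplicative (M × N) →* AddMonoidAlgebra (AddMonoidAlgebra ℤ N) M where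
  toFun p := AddMonoidAlgebra.single p.toAdd.1 (AddMonoidAlgebra.single p.toAdd.2 1)
  map_one' := by
    rw [AddMonoidAlgebra.one_def (R := AddMonoidAlgebra ℤ N), ← AddMonoidAlgebra.one_def]
    rfl
  map_mul' x y := by
    rw [AddMonoidAlgebra.single_mul_single, AddMonoidAlgebra.single_mul_single, mul_one]
    rfl

noncomputable def bwdHom :
    AddMonoidAlgebra ℤ (M × N) →+* AddMonoidAlgebra (AddMonoidAlgebra ℤ N) M :=
  AddMonoidAlgebra.liftNCRingHom (Int.castRingHom _) (gP M N) fun _ _ => Commute.all _ _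

lemma bwd_single (p : M × N) (c : ℤ) :
    bwdHom M N (AddMonoidAlgebra.single p c)
      = AddMonoidAlgebra.single p.1 (AddMonoidAlgebra.single p.2 c) := by
  show AddMonoidAlgebra.liftNC _ _ (AddMonoidAlgebra.single p c) = _
  rw [AddMonoidAlgebra.liftNC_single]
  show ((c : ℤ) : AddMonoidAlgebra (AddMonoidAlgebra ℤ N) M) * gP M N (Multiplicative.ofAdd p) = _
  rw [AddMonoidAlgebra.intCast_def, AddMonoidAlgebra.intCast_def]
  show AddMonoidAlgebra.single 0 (AddMonoidAlgebra.single 0 (c : ℤ))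
      * AddMonoidAlgebra.single p.1 (AddMonoidAlgebra.single p.2 1) = _
  rw [AddMonoidAlgebra.single_mul_single, AddMonoidAlgebra.single_mul_single, zero_add, zero_add,
    mul_one]

lemma bwd_fwd : (bwdHom M N).comp (fwdHom M N) = RingHom.id _ := by
  apply AddMonoidAlgebra.ringHom_ext
  · intro s
    have key : ((bwdHom M N).comp (fwdHom M N)).comp AddMonoidAlgebra.singleZeroRingHom
        = (AddMonoidAlgebra.singleZeroRingHom :
            AddMonoidAlgebra ℤ N →+* AddMonoidAlgebra (AddMonoidAlgebra ℤ N) M) := by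
      apply AddMonoidAlgebra.ringHom_ext
      · intro c
        simp [fwd_single, cHom_single, bwd_single, AddMonoidAlgebra.single_mul_single,
          ← AddMonoidAlgebra.one_def, Prod.mk_add_mk, Finsupp.singleAddHom_apply]
      · intro a
        simp [fwd_single, cHom_single, bwd_single, AddMonoidAlgebra.single_mul_single,
          ← AddMonoidAlgebra.one_def, Prod.mk_add_mk, Finsupp.singleAddHom_apply]
    exact RingHom.congr_fun key s
  · intro a
    simp only [RingHom.coe_comp, Function.comp_apply, RingHom.id_apply]
    rw [show (1 : AddMonoidAlgebra ℤ N) = AddMonoidAlgebra.single 0 1 from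
      AddMonoidAlgebra.one_def]
    simp [fwd_single, cHom_single, bwd_single, AddMonoidAlgebra.single_mul_single,
          ← AddMonoidAlgebra.one_def, Prod.mk_add_mk, Finsupp.singleAddHom_apply]

lemma fwd_bwd : (fwdHom M N).comp (bwdHom M N) = RingHom.id _ := by
  apply AddMonoidAlgebra.ringHom_ext
  · intro c
    simp [fwd_single, cHom_single, bwd_single, AddMonoidAlgebra.single_mul_single,
          ← AddMonoidAlgebra.one_def, Prod.mk_add_mk, Finsupp.singleAddHom_apply, Prod.mk_zero_zero]
  · intro p
    simp [fwd_single, cHom_single, bwd_single, AddMonoidAlgebra.single_mul_single,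
          ← AddMonoidAlgebra.one_def, Prod.mk_add_mk, Finsupp.singleAddHom_apply]

noncomputable def iterEquiv :
    AddMonoidAlgebra (AddMonoidAlgebra ℤ N) M ≃ₐ[ℤ] AddMonoidAlgebra ℤ (M × N) :=
  AlgEquiv.ofRingEquiv
    (f :=
      { toFun := fwdHom M N
        invFun := bwdHom M N
        left_inv := fun x => RingHom.congr_fun (bwd_fwd M N) x
        right_inv := fun x => RingHom.congr_fun (fwd_bwd M N) x
        map_add' := map_add _
        map_mul' := map_mul _ })
    (fun z => by
      simp only [algebraMap_int_eq, eq_intCast, RingEquiv.coe_mk, Equiv.coe_fn_mk]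
      exact map_intCast _ z)

end Iter

section Ver

variable (m : ℕ)

lemma sumval (d : Fin m →₀ ℕ) : (d.sum fun _ e => e) = ∑ i, d i :=
  Finsupp.sum_fintype _ _ (fun _ => rfl)

/-- The generator map. -/
noncomputable def phi : Multiplicative (VC m) →* (evenVeronese ℤ m) where
  toFun v :=
    ⟨MvPolynomial.monomial (Finsupp.equivFunOnFinite.symm v.toAdd.1) 1, by
      intro d hd
      have h2 := MvPolynomial.support_monomial_subset hd
      simp only [Finset.mem_singleton] at h2
      subst h2
      rw [sumval]
      have hv := v.toAdd.2
      simp only [Finsupp.coe_equivFunOnFinite_symm]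
      obtain ⟨c, hc⟩ := hv
      exact ⟨c, by omega⟩⟩
  map_one' := by
    apply Subtype.ext
    show MvPolynomial.monomial _ _ = 1
    have h0 : (Finsupp.equivFunOnFinite.symm
        ((Multiplicative.toAdd (1 : Multiplicative (VC m))).1) : Fin m →₀ ℕ) = 0 :=
      Finsupp.ext fun i => rfl
    rw [h0]
    simp [MvPolynomial.monomial_zero']
  map_mul' x y := by
    apply Subtype.ext
    show MvPolynomial.monomial _ _ = MvPolynomial.monomial _ _ * MvPolynomial.monomial _ _
    rw [MvPolynomial.monomial_mul, mul_one]
    have hadd : (Finsupp.equivFunOnFinite.symm ((Multiplicative.toAdd (x * y)).1) : Fin m →₀ ℕ)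
        = Finsupp.equivFunOnFinite.symm ((Multiplicative.toAdd x).1)
          + Finsupp.equivFunOnFinite.symm ((Multiplicative.toAdd y).1) :=
      Finsupp.ext fun i => rfl
    rw [hadd]

noncomputable def F : AddMonoidAlgebra ℤ (VC m) →ₐ[ℤ] (evenVeronese ℤ m) :=
  AddMonoidAlgebra.lift ℤ _ (VC m) (phi m)

/-- the inclusion of `VC m` into `Fin m →₀ ℕ`. -/
noncomputable def iota : (VC m) →+ (Fin m →₀ ℕ) :=
  (Finsupp.addEquivFunOnFinite.symm : (Fin m → ℕ) ≃+ (Fin m →₀ ℕ)).toAddMonoidHom.comp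
    (VC m).subtype

lemma iota_inj : Function.Injective (iota m) :=
  Finsupp.addEquivFunOnFinite.symm.injective.comp Subtype.val_injective

lemma val_comp_F :
    (evenVeronese ℤ m).val.comp (F m)
      = AddMonoidAlgebra.mapDomainAlgHom ℤ ℤ (iota m) := by
  apply AddMonoidAlgebra.algHom_ext
  intro v
  have h1 : (F m) (AddMonoidAlgebra.single v 1) = phi m (Multiplicative.ofAdd v) := by
    rw [F, AddMonoidAlgebra.lift_single, one_smul]
  rw [AlgHom.comp_apply, h1]
  show (phi m (Multiplicative.ofAdd v)).1
      = AddMonoidAlgebra.mapDomain (iota m) (AddMonoidAlgebra.single v 1)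
  rw [AddMonoidAlgebra.mapDomain_single, MvPolynomial.single_eq_monomial]
  rfl
  exact Subsingleton.elim _ _

lemma F_inj : Function.Injective (F m) := by
  intro x y h
  have h2 : ((evenVeronese ℤ m).val.comp (F m)) x = ((evenVeronese ℤ m).val.comp (F m)) y := by
    simp only [AlgHom.comp_apply, h]
  rw [val_comp_F] at h2
  exact AddMonoidAlgebra.mapDomain_injective (iota_inj m) h2

noncomputable def qmap (p : MvPolynomial (Fin m) ℤ) (d : Fin m →₀ ℕ) :
    AddMonoidAlgebra ℤ (VC m) :=
  if h : 2 ∣ ∑ i, d i then AddMonoidAlgebra.single (⟨⇑d, h⟩ : VC m) (MvPolynomial.coeff d p)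
  else 0

lemma F_surj : Function.Surjective (F m) := by
  rintro ⟨p, hp⟩
  classical
  refine ⟨∑ d ∈ p.support, qmap m p d, Subtype.ext ?_⟩
  show ((evenVeronese ℤ m).val.comp (F m)) (∑ d ∈ p.support, qmap m p d) = p
  rw [val_comp_F, map_sum]
  have key : ∀ d ∈ p.support,
      (AddMonoidAlgebra.mapDomainAlgHom ℤ ℤ (iota m)) (qmap m p d)
        = MvPolynomial.monomial d (MvPolynomial.coeff d p) := by
    intro d hd
    have hdvd : 2 ∣ ∑ i, d i := by
      have := hp d hd
      rw [sumval] at this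
      obtain ⟨c, hc⟩ := this
      exact ⟨c, by omega⟩
    rw [qmap, dif_pos hdvd]
    simp only [AddMonoidAlgebra.mapDomainAlgHom_apply, AddMonoidAlgebra.mapDomain_single]
    rw [← MvPolynomial.single_eq_monomial]
    congr 1
    show Finsupp.equivFunOnFinite.symm ⇑d = d
    exact Finsupp.equivFunOnFinite_symm_coe d
  exact (Finset.sum_congr rfl key).trans (MvPolynomial.support_sum_monomial_coeff p)

noncomputable def veroneseEquiv : AddMonoidAlgebra ℤ (VC m) ≃ₐ[ℤ] (evenVeronese ℤ m) :=
  AlgEquiv.ofBijective (F m) ⟨F_inj m, F_surj m⟩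

end Ver

/-- For `n ≥ 3`, the monoid `Mₙ = {l ∈ ℤ₊ⁿ | ∑ i·lᵢ even}` of type `Cₙ` decomposes as
`ℤ₊^{⌊n/2⌋} ⊕ V` with `V = {k ∈ ℤ₊^{⌈n/2⌉} | ∑ kᵢ even}`; consequently its monoid algebra
`ℤ[Mₙ]` is a polynomial ring in `⌊n/2⌋` variables over `ℤ[V]`, and `ℤ[V]` is the second
Veronese subring of a polynomial ring in `⌈n/2⌉` variables over `ℤ`. -/
theorem Cn_invariant_structure (n : ℕ) (hn : 3 ≤ n) :
    Nonempty ((MC n) ≃+ ((Fin (n / 2) → ℕ) × (VC ((n + 1) / 2)))) ∧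
    Nonempty (AddMonoidAlgebra ℤ (MC n) ≃ₐ[ℤ]
      MvPolynomial (Fin (n / 2)) (AddMonoidAlgebra ℤ (VC ((n + 1) / 2)))) ∧
    Nonempty (AddMonoidAlgebra ℤ (VC ((n + 1) / 2)) ≃ₐ[ℤ]
      (evenVeronese ℤ ((n + 1) / 2))) := by
  refine ⟨⟨mcEquiv n⟩, ⟨?_⟩, ⟨veroneseEquiv ((n + 1) / 2)⟩⟩
  exact ((AddMonoidAlgebra.domCongr ℤ ℤ (mcEquiv n)).trans
    (AddMonoidAlgebra.domCongr ℤ ℤ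
      (AddEquiv.prodCongr (Finsupp.addEquivFunOnFinite).symm (AddEquiv.refl (VC ((n + 1) / 2)))))).trans
    (iterEquiv (Fin (n / 2) →₀ ℕ) (VC ((n + 1) / 2))).symm
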